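/- Let r ≥ 1, 0 ≤ j ≤ 2^{r-1} - 1, and let A = M^{2^r - j} in F_2[x]. Then the length ℓ_A equals j + 1 if j ≠ 0, and equals 2^r + 1 if j = 0. -/
import Mathlib

open Polynomial Finset

/-- The polynomial `M = x^2 + x + 1` over `F_2`. -/
noncomputable def M : Polynomial (ZMod 2) := X ^ 2 + X + 1

/-- The odd part of a binary polynomial: `P` divided by `x^{val_x(P)} (x+1)^{val_{x+1}(P)}`. -/
noncomputable def oddPart (P : Polynomial (ZMod 2)) : Polynomial (ZMod 2) :=
  P / (X ^ P.rootMultiplicity 0 * (X + 1) ^ P.rootMultiplicity 1)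

/-- The Collatz sequence of a binary polynomial `A`:
`A_0 = A`, `A_{2k+1} = oddPart A_{2k}`, `A_{2k+2} = 1 + M * A_{2k+1}`. -/
noncomputable def collatz (A : Polynomial (ZMod 2)) : ℕ → Polynomial (ZMod 2)
  | 0 => A
  | n + 1 => if n % 2 = 0 then oddPart (collatz A n) else 1 + M * collatz A n

/-- `a_k`: the multiplicity of `x` in `A_k`. -/
noncomputable def aSeq (A : Polynomial (ZMod 2)) (k : ℕ) : ℕ :=
  (collatz A k).rootMultiplicity 0

/-- `b_k`: the multiplicity of `x + 1` in `A_k`. -/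
noncomputable def bSeq (A : Polynomial (ZMod 2)) (k : ℕ) : ℕ :=
  (collatz A k).rootMultiplicity 1

/-- The length `ℓ_A = m + 1`, where `m` is the least nonnegative integer
with `A_{2m+1} = 1`. -/
noncomputable def collatzLength (A : Polynomial (ZMod 2)) : ℕ :=
  sInf {m : ℕ | collatz A (2 * m + 1) = 1} + 1

/-! ### Auxiliary development -/

noncomputable def UU : Polynomial (ZMod 2) := X ^ 2 + X

lemma M_eq : M = 1 + UU := by unfold M UU; ring

lemma two0 : (2 : Polynomial (ZMod 2)) = 0 := by
  have : ((2:ℕ) : Polynomial (ZMod 2)) = 0 := by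
    exact_mod_cast CharP.cast_eq_zero (Polynomial (ZMod 2)) 2
  simpa using this

lemma UU_eval0 : UU.eval 0 = 0 := by simp [UU]
lemma UU_eval1 : UU.eval 1 = 0 := by simp [UU]; decide
lemma M_eval0 : M.eval 0 = 1 := by simp [M]
lemma M_eval1 : M.eval 1 = 1 := by simp [M]; decide

lemma UU_ne_zero : UU ≠ 0 := by
  intro h
  have := congrArg (fun p => Polynomial.coeff p 1) h
  simp [UU] at this

lemma M_ne_zero : M ≠ 0 := by
  intro h
  have := congrArg (fun p => Polynomial.eval 0 p) h
  rw [h] at this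
  simp at this
  have := M_eval0
  rw [h] at this; simp at this

lemma fresh (a : ℕ) : ((1 : Polynomial (ZMod 2)) + UU) ^ (2^a) = 1 + UU ^ (2^a) := by
  rw [add_pow_char_pow, one_pow]

lemma ne_zero_of_eval0 {p : Polynomial (ZMod 2)} (h : p.eval 0 = 1) : p ≠ 0 := by
  intro h0; rw [h0] at h; simp at h

lemma oddPart_of_odd {P : Polynomial (ZMod 2)} (h0 : P.eval 0 = 1) (h1 : P.eval 1 = 1) :
    oddPart P = P := by
  unfold oddPart
  have r0 : P.rootMultiplicity 0 = 0 :=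
    Polynomial.rootMultiplicity_eq_zero (by simp [Polynomial.IsRoot, h0])
  have r1 : P.rootMultiplicity 1 = 0 :=
    Polynomial.rootMultiplicity_eq_zero (by simp [Polynomial.IsRoot, h1])
  rw [r0, r1, pow_zero, pow_zero, one_mul]
  exact EuclideanDomain.div_one P

lemma X_add_one_eq : ((X : Polynomial (ZMod 2)) + 1) = X - Polynomial.C 1 := by
  have : (Polynomial.C (1:ZMod 2)) = 1 := map_one Polynomial.C
  rw [this, sub_eq_add_neg, CharTwo.neg_eq]

lemma X_add_one_ne : ((X : Polynomial (ZMod 2)) + 1) ≠ 0 := by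
  intro h
  have := congrArg (fun p => Polynomial.eval 0 p) h
  simp at this

lemma oddPart_UU_pow_mul (v : ℕ) {g : Polynomial (ZMod 2)}
    (h0 : g.eval 0 = 1) (h1 : g.eval 1 = 1) :
    oddPart (UU ^ v * g) = g := by
  have hg : g ≠ 0 := ne_zero_of_eval0 h0
  have hXne : (X : Polynomial (ZMod 2)) ≠ 0 := X_ne_zero
  have hUUf : UU = X * (X+1) := by unfold UU; ring
  have hfac : UU ^ v * g = X ^ v * (X + 1) ^ v * g := by
    rw [hUUf, mul_pow]
  have hne : X ^ v * ((X + 1) ^ v * g) ≠ 0 :=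
    mul_ne_zero (pow_ne_zero _ hXne) (mul_ne_zero (pow_ne_zero _ X_add_one_ne) hg)
  have hne' : (X + 1) ^ v * (X ^ v * g) ≠ 0 :=
    mul_ne_zero (pow_ne_zero _ X_add_one_ne) (mul_ne_zero (pow_ne_zero _ hXne) hg)
  have rX : ((X : Polynomial (ZMod 2)) ^ v).rootMultiplicity 0 = v := by
    have := Polynomial.rootMultiplicity_X_sub_C_pow (R := ZMod 2) 0 v
    simpa using this
  have rX1 : (((X : Polynomial (ZMod 2)) + 1) ^ v).rootMultiplicity 1 = v := by
    have := Polynomial.rootMultiplicity_X_sub_C_pow (R := ZMod 2) 1 v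
    rw [X_add_one_eq]
    exact this
  have r0 : (UU ^ v * g).rootMultiplicity 0 = v := by
    rw [hfac, mul_assoc, Polynomial.rootMultiplicity_mul hne, rX,
      Polynomial.rootMultiplicity_eq_zero]
    · simp
    · simp [Polynomial.IsRoot, h0]
  have r1 : (UU ^ v * g).rootMultiplicity 1 = v := by
    have hfac' : UU ^ v * g = (X + 1) ^ v * (X ^ v * g) := by rw [hUUf, mul_pow]; ring
    rw [hfac', Polynomial.rootMultiplicity_mul hne', rX1,
      Polynomial.rootMultiplicity_eq_zero]
    · simp
    · simp [Polynomial.IsRoot, h1]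
  unfold oddPart
  rw [r0, r1]
  have : UU ^ v * g = (X ^ v * (X + 1) ^ v) * g := by rw [hUUf, mul_pow]
  rw [this, mul_div_cancel_left₀]
  exact mul_ne_zero (pow_ne_zero _ hXne) (pow_ne_zero _ X_add_one_ne)

lemma collatz_zero (A : Polynomial (ZMod 2)) : collatz A 0 = A := rfl

lemma collatz_succ (A : Polynomial (ZMod 2)) (n : ℕ) :
    collatz A (n + 1) = if n % 2 = 0 then oddPart (collatz A n) else 1 + M * collatz A n := rfl

lemma collatz_one (A : Polynomial (ZMod 2)) : collatz A 1 = oddPart A := by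
  rw [collatz_succ]; simp [collatz_zero]

lemma collatz_even_succ (A : Polynomial (ZMod 2)) (k : ℕ) :
    collatz A (2 * k + 2) = 1 + M * collatz A (2 * k + 1) := by
  rw [show 2 * k + 2 = (2 * k + 1) + 1 from rfl, collatz_succ]
  simp [Nat.add_mod]

lemma collatz_odd_succ (A : Polynomial (ZMod 2)) (k : ℕ) :
    collatz A (2 * k + 1) = oddPart (collatz A (2 * k)) := by
  rw [collatz_succ]
  simp [Nat.mul_mod_right]

lemma shift1 {B : Polynomial (ZMod 2)} (hB : oddPart B = B) :
    ∀ k, collatz B (k + 2) = collatz (1 + M * B) k := by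
  intro k
  induction k with
  | zero =>
    have h2 : collatz B (0 + 2) = 1 + M * collatz B 1 := by
      have := collatz_even_succ B 0
      simpa using this
    rw [h2, collatz_one, hB]
    rfl
  | succ k ih =>
    calc collatz B (k + 1 + 2)
        = if (k + 2) % 2 = 0 then oddPart (collatz B (k + 2)) else 1 + M * collatz B (k + 2) :=
          collatz_succ B (k + 2)
      _ = if k % 2 = 0 then oddPart (collatz (1 + M * B) k) else 1 + M * collatz (1 + M * B) k := by
          rw [ih, Nat.add_mod_right]
      _ = collatz (1 + M * B) (k + 1) := (collatz_succ _ k).symm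

lemma shift2 {g : Polynomial (ZMod 2)} (v : ℕ) (h0 : g.eval 0 = 1) (h1 : g.eval 1 = 1) :
    ∀ k, collatz (UU ^ v * g) (k + 1) = collatz g (k + 1) := by
  intro k
  induction k with
  | zero =>
    rw [collatz_one, collatz_one, oddPart_UU_pow_mul v h0 h1, oddPart_of_odd h0 h1]
  | succ k ih =>
    calc collatz (UU ^ v * g) (k + 1 + 1)
        = if (k+1) % 2 = 0 then oddPart (collatz (UU ^ v * g) (k+1))
            else 1 + M * collatz (UU ^ v * g) (k+1) := collatz_succ _ (k+1)
      _ = if (k+1) % 2 = 0 then oddPart (collatz g (k+1)) else 1 + M * collatz g (k+1) := by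
          rw [ih]
      _ = collatz g (k + 1 + 1) := (collatz_succ _ (k+1)).symm

def Reaches (f : Polynomial (ZMod 2)) (d : ℕ) : Prop :=
  collatz f (2 * d + 1) = 1 ∧ ∀ m, m < d → collatz f (2 * m + 1) ≠ 1

lemma reaches_one : Reaches 1 0 := by
  constructor
  · show collatz 1 1 = 1
    rw [collatz_one]
    exact oddPart_of_odd (by simp) (by simp)
  · intro m hm; omega

lemma reaches_step {f g : Polynomial (ZMod 2)} {v d : ℕ}
    (hf0 : f.eval 0 = 1) (hf1 : f.eval 1 = 1) (hfne : f ≠ 1)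
    (hg0 : g.eval 0 = 1) (hg1 : g.eval 1 = 1)
    (hid : 1 + M * f = UU ^ v * g) (hR : Reaches g d) : Reaches f (d + 1) := by
  have hOf : oddPart f = f := oddPart_of_odd hf0 hf1
  have key : ∀ m : ℕ, collatz f (2 * (m + 1) + 1) = collatz g (2 * m + 1) := by
    intro m
    have e1 : 2 * (m + 1) + 1 = (2 * m + 1) + 2 := by ring
    rw [e1, shift1 hOf, hid]
    exact shift2 v hg0 hg1 (2 * m)
  constructor
  · rw [key d, hR.1]
  · intro m hm
    match m with
    | 0 =>
      show collatz f 1 ≠ 1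
      rw [collatz_one, hOf]
      exact hfne
    | (m' + 1) =>
      rw [key m']
      exact hR.2 m' (by omega)

/-- Geometric-sum division: `1 + (1+U)^(2^a * s) = U^(2^a) * P`, with `P` odd when `s` is odd. -/
lemma div_lemma (a s : ℕ) :
    ∃ P : Polynomial (ZMod 2), 1 + (1 + UU) ^ (2 ^ a * s) = UU ^ (2 ^ a) * P ∧
      (Odd s → P.eval 0 = 1 ∧ P.eval 1 = 1) := by
  set z : Polynomial (ZMod 2) := UU ^ (2 ^ a) with hz
  refine ⟨∑ e ∈ Finset.range s, (1 + z) ^ e, ?_, ?_⟩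
  · have h1 : (1 + UU) ^ (2 ^ a * s) = (1 + z) ^ s := by
      rw [pow_mul, fresh a]
    have h2 := geom_sum_mul (1 + z) s
    rw [h1]
    linear_combination -h2 + two0
  · intro hs
    have hzval : ∀ c : ZMod 2, Polynomial.eval c UU = 0 → Polynomial.eval c z = 0 := by
      intro c hc
      rw [hz, Polynomial.eval_pow, hc, zero_pow (by positivity : (2:ℕ)^a ≠ 0)]
    have heval : ∀ c : ZMod 2, Polynomial.eval c UU = 0 →
        Polynomial.eval c (∑ e ∈ Finset.range s, (1 + z) ^ e) = 1 := by
      intro c hc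
      rw [Polynomial.eval_finset_sum]
      have : ∀ e ∈ Finset.range s, Polynomial.eval c ((1 + z) ^ e) = 1 := by
        intro e _
        rw [Polynomial.eval_pow, Polynomial.eval_add, Polynomial.eval_one, hzval c hc,
          add_zero, one_pow]
      rw [Finset.sum_congr rfl this, Finset.sum_const, Finset.card_range, nsmul_eq_mul, mul_one]
      obtain ⟨k, rfl⟩ := hs
      push_cast
      have : ((2:ZMod 2)) = 0 := by decide
      rw [this]
      ring
    exact ⟨heval 0 UU_eval0, heval 1 UU_eval1⟩

/-- cancellation: from `U^n * Y = U^b * g` with `Y(0)=0`, `g(0)=1`, get `Y = U^v g`, `v ≥ 1`. -/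
lemma cancel_lemma {n b : ℕ} {Y g : Polynomial (ZMod 2)}
    (hY : Y.eval 0 = 0) (hg : g.eval 0 = 1) (h : UU ^ n * Y = UU ^ b * g) :
    ∃ v, 1 ≤ v ∧ Y = UU ^ v * g := by
  rcases le_or_gt b n with hbn | hbn
  · exfalso
    have h' : UU ^ b * (UU ^ (n - b) * Y) = UU ^ b * g := by
      rw [← mul_assoc, ← pow_add]
      rw [show b + (n - b) = n by omega]
      exact h
    have h2 : UU ^ (n - b) * Y = g := mul_left_cancel₀ (pow_ne_zero _ UU_ne_zero) h'
    have := congrArg (Polynomial.eval 0) h2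
    rw [Polynomial.eval_mul, hY, mul_zero, hg] at this
    exact zero_ne_one this
  · refine ⟨b - n, by omega, ?_⟩
    have h' : UU ^ n * Y = UU ^ n * (UU ^ (b - n) * g) := by
      rw [← mul_assoc, ← pow_add, show n + (b - n) = b by omega]
      exact h
    exact mul_left_cancel₀ (pow_ne_zero _ UU_ne_zero) h'

/-- uniqueness of the odd quotient -/
lemma odd_quot_unique {a b : ℕ} {P R : Polynomial (ZMod 2)}
    (hP : P.eval 0 = 1) (hR : R.eval 0 = 1) (h : UU ^ a * P = UU ^ b * R) : P = R := by
  rcases le_or_gt a b with hab | hab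
  · have h' : UU ^ a * P = UU ^ a * (UU ^ (b - a) * R) := by
      rw [← mul_assoc, ← pow_add, show a + (b - a) = b by omega]; exact h
    have h2 : P = UU ^ (b - a) * R := mul_left_cancel₀ (pow_ne_zero _ UU_ne_zero) h'
    have h3 := congrArg (Polynomial.eval 0) h2
    rw [Polynomial.eval_mul, Polynomial.eval_pow, UU_eval0, hP] at h3
    by_cases hd : b - a = 0
    · rw [hd, pow_zero, one_mul] at h2; exact h2
    · exfalso
      rw [zero_pow hd, zero_mul] at h3
      exact one_ne_zero h3
  · have h' : UU ^ b * (UU ^ (a - b) * P) = UU ^ b * R := by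
      rw [← mul_assoc, ← pow_add, show b + (a - b) = a by omega]; exact h
    have h2 : UU ^ (a - b) * P = R := mul_left_cancel₀ (pow_ne_zero _ UU_ne_zero) h'
    have h3 := congrArg (Polynomial.eval 0) h2
    rw [Polynomial.eval_mul, Polynomial.eval_pow, UU_eval0, hR] at h3
    by_cases hd : a - b = 0
    · rw [hd, pow_zero, one_mul] at h2; exact h2
    · exfalso
      rw [zero_pow hd, zero_mul] at h3
      exact zero_ne_one h3

lemma one_add_UU_ne : (1 + UU : Polynomial (ZMod 2)) ≠ 0 := by
  rw [← M_eq]; exact M_ne_zero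

lemma F_eval0 {e : ℕ} (he : 1 ≤ e) (Q : Polynomial (ZMod 2)) :
    (1 + UU ^ e * Q).eval 0 = 1 := by
  rw [Polynomial.eval_add, Polynomial.eval_one, Polynomial.eval_mul, Polynomial.eval_pow,
    UU_eval0, zero_pow (by omega : e ≠ 0), zero_mul, add_zero]

lemma F_eval1 {e : ℕ} (he : 1 ≤ e) (Q : Polynomial (ZMod 2)) :
    (1 + UU ^ e * Q).eval 1 = 1 := by
  rw [Polynomial.eval_add, Polynomial.eval_one, Polynomial.eval_mul, Polynomial.eval_pow,
    UU_eval1, zero_pow (by omega : e ≠ 0), zero_mul, add_zero]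

lemma F_ne_one {e e' : ℕ} {K : Polynomial (ZMod 2)} (hK : K ≠ 0) :
    (1 + UU ^ e * ((1 + UU) ^ e' * K)) ≠ 1 := by
  intro h
  have hz : UU ^ e * ((1 + UU) ^ e' * K) = 0 := by
    have h' := h
    rw [show (1 : Polynomial (ZMod 2)) = 1 + 0 by ring] at h'
    exact add_left_cancel (by linear_combination h')
  exact (mul_ne_zero (pow_ne_zero _ UU_ne_zero)
    (mul_ne_zero (pow_ne_zero _ one_add_UU_ne) hK)) hz

lemma block {w b : ℕ} {K g : Polynomial (ZMod 2)} {d : ℕ}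
    (hK : K ≠ 0) (hg0 : g.eval 0 = 1) (hg1 : g.eval 1 = 1)
    (hid : UU ^ w * (1 + (1 + UU) ^ w * K) = UU ^ b * g)
    (hR : Reaches g d) :
    ∀ e, ∀ e', 1 ≤ e → e + e' = w → Reaches (1 + UU ^ e * ((1 + UU) ^ e' * K)) (d + e) := by
  intro e
  induction e with
  | zero => intro e' h1 h2; omega
  | succ e ih =>
    intro e' h1 h2
    by_cases he : e = 0
    · subst he
      -- base case : e = 1
      obtain rfl : w = 1 + e' := by omega
      set F : Polynomial (ZMod 2) := 1 + UU ^ 1 * ((1 + UU) ^ e' * K) with hF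
      have hYid : UU ^ e' * (1 + M * F) = UU ^ b * g := by
        rw [← hid, hF, M_eq]
        linear_combination (UU ^ e' : Polynomial (ZMod 2)) * two0
      have hY0 : (1 + M * F).eval 0 = 0 := by
        rw [Polynomial.eval_add, Polynomial.eval_one, Polynomial.eval_mul, M_eval0,
          one_mul, F_eval0 (by omega)]
        decide
      obtain ⟨v, hv1, hYv⟩ := cancel_lemma hY0 hg0 hYid
      have := reaches_step (F_eval0 (by omega) _) (F_eval1 (by omega) _) (F_ne_one hK)
        hg0 hg1 hYv hR
      exact this
    · -- inductive step
      have h1e : 1 ≤ e := by omega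
      have ihe := ih (e' + 1) h1e (by omega)
      set F : Polynomial (ZMod 2) := 1 + UU ^ (e+1) * ((1 + UU) ^ e' * K) with hF
      have hstep : 1 + M * F = UU ^ 1 * (1 + UU ^ e * ((1 + UU) ^ (e'+1) * K)) := by
        rw [hF, M_eq]
        linear_combination two0
      have := reaches_step (F_eval0 (by omega) _) (F_eval1 (by omega) _) (F_ne_one hK)
        (F_eval0 h1e _) (F_eval1 h1e _) hstep ihe
      have h3 : d + e + 1 = d + (e + 1) := by omega
      rw [h3] at this
      exact this

lemma monic_M : M.Monic := by
  unfold M; monicity!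

lemma natDegree_M : M.natDegree = 2 := by
  unfold M; compute_degree!

lemma M_pow_ne_one {n : ℕ} (hn : 1 ≤ n) : M ^ n ≠ 1 := by
  intro h
  have h1 : (M ^ n).natDegree = n * M.natDegree := monic_M.natDegree_pow n
  rw [h, natDegree_M, Polynomial.natDegree_one] at h1
  omega

lemma one_add_UU_pow_ne_one {n : ℕ} (hn : 1 ≤ n) : (1 + UU : Polynomial (ZMod 2)) ^ n ≠ 1 := by
  rw [← M_eq]; exact M_pow_ne_one hn

lemma main_odd (r : ℕ) (hr : 2 ≤ r) :
    ∀ i, i + 2 ≤ 2 ^ (r - 1) → ∀ c (f : Polynomial (ZMod 2)),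
      1 + (1 + UU) ^ (2 ^ r - i) = UU ^ c * f →
      f.eval 0 = 1 → f.eval 1 = 1 → Reaches f i := by
  intro i
  induction i using Nat.strong_induction_on with
  | _ i ih =>
    intro hbound c f hcf hf0 hf1
    rcases Nat.eq_zero_or_pos i with hi0 | hipos
    · -- base case i = 0
      subst hi0
      rw [Nat.sub_zero] at hcf
      have hfr : (1 + UU : Polynomial (ZMod 2)) ^ (2 ^ r) = 1 + UU ^ (2 ^ r) := fresh r
      have h1 : UU ^ (2 ^ r) * 1 = UU ^ c * f := by
        rw [← hcf, hfr]
        linear_combination -two0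
      have hf : (1 : Polynomial (ZMod 2)) = f :=
        odd_quot_unique (by simp) hf0 h1
      rw [← hf]
      exact reaches_one
    · -- inductive case i ≥ 1
      obtain ⟨a, s, hs_odd, his⟩ := Nat.exists_eq_two_pow_mul_odd (show i ≠ 0 by omega)
      have hs1 : 1 ≤ s := hs_odd.pos
      have hci : 2 ^ a ≤ i := by
        calc 2 ^ a = 2 ^ a * 1 := by ring
        _ ≤ 2 ^ a * s := by exact Nat.mul_le_mul_left _ hs1
        _ = i := his.symm
      have har : a + 1 < r := by
        by_contra har
        have h2 : 2 ^ (r - 1) ≤ 2 ^ a := Nat.pow_le_pow_right (by norm_num) (by omega)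
        omega
      have h2r : 2 ^ r = 2 * 2 ^ (r - 1) := by
        rw [← pow_succ']
        congr 1
        omega
      have hpa : (1:ℕ) ≤ 2 ^ a := by
        have := pow_pos (show 0 < 2 by norm_num) a
        omega
      -- E' = 2^(r-1-a),  2^(r-1) = 2^a * E'
      have hE : 2 ^ (r - 1) = 2 ^ a * 2 ^ (r - 1 - a) := by
        rw [← pow_add]
        congr 1
        omega
      have hsE : s < 2 ^ (r - 1 - a) := by
        by_contra hse
        have : 2 ^ a * 2 ^ (r - 1 - a) ≤ 2 ^ a * s := Nat.mul_le_mul_left _ (by omega)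
        omega
      -- 2*2^(r-1-a) - s = 2*s₄ + 1
      obtain ⟨s₄, hs₄⟩ : ∃ s₄, 2 * 2 ^ (r - 1 - a) = s + (2 * s₄ + 1) := by
        obtain ⟨k, hk⟩ := hs_odd
        exact ⟨2 ^ (r - 1 - a) - k - 1, by omega⟩
      have hq : 2 ^ r = 2 ^ a * (2 * 2 ^ (r - 1 - a)) := by
        have : 2 ^ r = 2 * 2 ^ (r - 1) := by
          rw [← pow_succ']
          congr 1
          omega
        rw [this, hE]; ring
      -- key decomposition : 2^r = i + t + c₁ with t = 2^(a+1) * s₄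
      have hkey : 2 ^ r = i + (2 ^ (a + 1) * s₄ + 2 ^ a) := by
        rw [hq, hs₄, his, pow_succ]; ring
      have hs₄pos : 1 ≤ s₄ := by
        rcases Nat.eq_zero_or_pos s₄ with h | h
        · exfalso
          rw [h, mul_zero] at hkey
          omega
        · exact h
      -- the polynomial K
      obtain ⟨K, hKid, -⟩ := div_lemma (a + 1) s₄
      have hc2 : (2 : ℕ) ^ (a + 1) = 2 ^ a + 2 ^ a := by rw [pow_succ]; ring
      have hKne : K ≠ 0 := by
        intro hK0
        rw [hK0, mul_zero] at hKid
        have hW1 : (1 + UU : Polynomial (ZMod 2)) ^ (2 ^ (a+1) * s₄) = 1 := by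
          linear_combination hKid - two0
        exact one_add_UU_pow_ne_one
          (Nat.mul_pos (pow_pos (show 0 < 2 by norm_num) (a+1)) hs₄pos) hW1
      -- f' for i' = i - 2^a ;  2^r - i' = t + 2^(a+1)
      have hqi' : 2 ^ r - (i - 2 ^ a) = 2 ^ (a+1) * s₄ + (2 ^ a + 2 ^ a) := by omega
      obtain ⟨a', s', hs'odd, heq'⟩ :=
        Nat.exists_eq_two_pow_mul_odd (n := 2 ^ r - (i - 2 ^ a)) (by omega)
      obtain ⟨f', hf'id, hf'ev⟩ := div_lemma a' s'
      obtain ⟨hf'0, hf'1⟩ := hf'ev hs'odd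
      rw [← heq', hqi'] at hf'id
      -- IH gives Reaches f' (i - 2^a)
      have hIH : Reaches f' (i - 2 ^ a) := by
        refine ih (i - 2 ^ a) (by omega) (by omega) (2 ^ a') f' ?_ hf'0 hf'1
        rw [hqi']
        exact hf'id
      -- block identity
      have hbid : UU ^ (2 ^ a + 2 ^ a) * (1 + (1 + UU) ^ (2 ^ a + 2 ^ a) * K) =
          UU ^ (2 ^ a') * f' := by
        have hfr2 : ((1 + UU : Polynomial (ZMod 2))) ^ (2 ^ a + 2 ^ a) =
            1 + UU ^ (2 ^ a + 2 ^ a) := by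
          rw [← hc2]; exact fresh (a + 1)
        have hKid' : 1 + (1 + UU) ^ (2 ^ (a+1) * s₄) = UU ^ (2 ^ a + 2 ^ a) * K := by
          rw [← hc2]; exact hKid
        linear_combination (-((1+UU) ^ (2 ^ a + 2 ^ a))) * hKid' + hf'id + hfr2
          + (UU ^ (2 ^ a + 2 ^ a)) * two0
      have hblock := block hKne hf'0 hf'1 hbid hIH (2 ^ a) (2 ^ a) hpa rfl
      -- entry identity : f = F
      have hent : UU ^ (2 ^ a) * (1 + UU ^ (2 ^ a) * ((1 + UU) ^ (2 ^ a) * K)) =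
          UU ^ c * f := by
        have hfrA : ((1 + UU : Polynomial (ZMod 2))) ^ (2 ^ a) = 1 + UU ^ (2 ^ a) := fresh a
        have hqieq : 2 ^ r - i = 2 ^ (a+1) * s₄ + 2 ^ a := by omega
        rw [hqieq] at hcf
        rw [← hcf]
        apply mul_left_cancel₀ (pow_ne_zero (2 ^ a) one_add_UU_ne)
        have hKid2 : 1 + (1 + UU) ^ (2 ^ (a+1) * s₄) = UU ^ (2 ^ a) * (UU ^ (2 ^ a) * K) := by
          rw [hKid, hc2, pow_add]; ring
        linear_combination (-((1+UU) ^ (2^a) * (1+UU) ^ (2^a))) * hKid2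
          + ((1+UU) ^ (2^a)) * hfrA + (UU ^ (2^a) * (1+UU) ^ (2^a)) * two0
      have hfF : (1 + UU ^ (2 ^ a) * ((1 + UU) ^ (2 ^ a) * K)) = f :=
        odd_quot_unique (F_eval0 hpa _) hf0 hent
      rw [← hfF]
      have : i - 2 ^ a + 2 ^ a = i := by omega
      rw [← this]
      exact hblock

lemma length_of_reaches {A : Polynomial (ZMod 2)} {d : ℕ} (h : Reaches A d) :
    collatzLength A = d + 1 := by
  unfold collatzLength
  congr 1
  have hmemd : d ∈ {m : ℕ | collatz A (2 * m + 1) = 1} := h.1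
  apply le_antisymm (Nat.sInf_le hmemd)
  by_contra hlt
  push_neg at hlt
  have hmem := Nat.sInf_mem (⟨d, hmemd⟩ : {m : ℕ | collatz A (2 * m + 1) = 1}.Nonempty)
  exact h.2 _ hlt hmem

lemma reaches_M_pow_zero (r : ℕ) (hr : 1 ≤ r) : Reaches (M ^ (2 ^ r)) (2 ^ r) := by
  have hq2 : 2 ≤ 2 ^ r := by
    calc (2:ℕ) = 2 ^ 1 := by norm_num
    _ ≤ 2 ^ r := Nat.pow_le_pow_right (by norm_num) hr
  set e : ℕ := 2 ^ r - 1 with he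
  have heq : 2 ^ r = e + 1 := by omega
  have hbid : UU ^ (2 ^ r) * (1 + (1 + UU) ^ (2 ^ r) * 1) =
      UU ^ (2 ^ r + 2 ^ r) * 1 := by
    have hfr := fresh r
    rw [pow_add]
    linear_combination (UU ^ (2 ^ r)) * hfr + (UU ^ (2 ^ r)) * two0
  have hblock := block (K := 1) (by norm_num) (by simp) (by simp) hbid reaches_one
    e 1 (by omega) (by omega)
  -- final step
  have hid : 1 + M * M ^ (2 ^ r) = UU ^ 1 * (1 + UU ^ e * ((1 + UU) ^ 1 * 1)) := by
    have h1 : M * M ^ (2 ^ r) = (1 + UU) * ((1 + UU) ^ (2 ^ r)) := by rw [M_eq]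
    rw [h1, fresh r, heq]
    linear_combination two0
  have hA0 : (M ^ (2 ^ r)).eval 0 = 1 := by
    rw [Polynomial.eval_pow, M_eval0, one_pow]
  have hA1 : (M ^ (2 ^ r)).eval 1 = 1 := by
    rw [Polynomial.eval_pow, M_eval1, one_pow]
  have hfinal := reaches_step hA0 hA1 (M_pow_ne_one (by omega))
    (F_eval0 (by omega) _) (F_eval1 (by omega) _) hid hblock
  rw [show 0 + e + 1 = 2 ^ r by omega] at hfinal
  exact hfinal

lemma reaches_M_pow_pos (r j : ℕ) (hr : 1 ≤ r) (hj1 : 1 ≤ j) (hj : j ≤ 2 ^ (r - 1) - 1) :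
    Reaches (M ^ (2 ^ r - j)) j := by
  have hr2 : 2 ≤ r := by
    by_contra h
    interval_cases r
    simp_all
  have h2r : 2 ^ r = 2 * 2 ^ (r - 1) := by
    rw [← pow_succ']
    congr 1
    omega
  have hp1 : (1:ℕ) ≤ 2 ^ (r - 1) := by
    have := pow_pos (show 0 < 2 by norm_num) (r-1)
    omega
  have hbound : (j - 1) + 2 ≤ 2 ^ (r - 1) := by omega
  obtain ⟨a₀, s₀, hodd₀, heq₀⟩ :=
    Nat.exists_eq_two_pow_mul_odd (n := 2 ^ r - (j - 1)) (by omega)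
  obtain ⟨f₁, hfid, hev⟩ := div_lemma a₀ s₀
  obtain ⟨hf10, hf11⟩ := hev hodd₀
  rw [← heq₀] at hfid
  have hReach := main_odd r hr2 (j - 1) hbound (2 ^ a₀) f₁ hfid hf10 hf11
  have hid : 1 + M * M ^ (2 ^ r - j) = UU ^ (2 ^ a₀) * f₁ := by
    have h1 : M * M ^ (2 ^ r - j) = (1 + UU) ^ (2 ^ r - (j - 1)) := by
      rw [← pow_succ', M_eq]
      congr 1
      omega
    rw [h1]
    exact hfid
  have hA0 : (M ^ (2 ^ r - j)).eval 0 = 1 := by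
    rw [Polynomial.eval_pow, M_eval0, one_pow]
  have hA1 : (M ^ (2 ^ r - j)).eval 1 = 1 := by
    rw [Polynomial.eval_pow, M_eval1, one_pow]
  have hfinal := reaches_step hA0 hA1 (M_pow_ne_one (by omega))
    hf10 hf11 hid hReach
  rw [show j - 1 + 1 = j by omega] at hfinal
  exact hfinal

theorem length_M_pow (r j : ℕ) (hr : 1 ≤ r) (hj : j ≤ 2 ^ (r - 1) - 1)
    (A : Polynomial (ZMod 2)) (hA : A = M ^ (2 ^ r - j)) :
    (j ≠ 0 → collatzLength A = j + 1) ∧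
    (j = 0 → collatzLength A = 2 ^ r + 1) := by
  constructor
  · intro hj0
    rw [hA]
    exact length_of_reaches (reaches_M_pow_pos r j hr (by omega) hj)
  · intro hj0
    subst hj0
    rw [hA, Nat.sub_zero]
    exact length_of_reaches (reaches_M_pow_zero r hr)
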